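/- Let w = (p₀,…,pₙ) be a weight vector and φ₀ : ℂ^{n+1} → U₀ the chart of the weighted blow-up given by φ₀(x₀,…,xₙ) = ((x₀^{p₀}, x₀^{p₁}x₁, …, x₀^{pₙ}xₙ), [1 : x₁ : ⋯ : xₙ]_w). Then φ₀(x) = φ₀(y) if and only if there exists ξ ∈ μ_{p₀} with y₀ = ξ⁻¹x₀ and y_i = ξ^{p_i}x_i for i = 1,…,n. Hence φ₀ induces a bijection X(p₀; −1, p₁, …, pₙ) → U₀. -/

import Mathlib

/-- The orbit relation of the `ℂ*`-action on nonzero vectors with weights `w`, defining the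
weighted projective space `ℙⁿ_w` as `Quot (wpRel n w)`. -/
def wpRel (n : ℕ) (w : Fin (n + 1) → ℕ) :
    {v : Fin (n + 1) → ℂ // v ≠ 0} → {v : Fin (n + 1) → ℂ // v ≠ 0} → Prop :=
  fun x y => ∃ t : ℂ, t ≠ 0 ∧ ∀ j, y.1 j = t ^ w j * x.1 j

/-- The chart map `φ₀` of the weighted `p`-blow-up of `ℂ^{n+1}`:
`φ₀(x₀,…,xₙ) = ((x₀^{p₀}, x₀^{p₁}x₁, …, x₀^{pₙ}xₙ), [1 : x₁ : ⋯ : xₙ]_p)`. -/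
def wbPhi (n : ℕ) (p : Fin (n + 1) → ℕ) (x : Fin (n + 1) → ℂ) :
    (Fin (n + 1) → ℂ) × Quot (wpRel n p) :=
  (Fin.cons (x 0 ^ p 0) (fun i : Fin n => x 0 ^ p i.succ * x i.succ),
   Quot.mk _ ⟨Fin.cons 1 (fun i : Fin n => x i.succ),
     fun h => one_ne_zero (α := ℂ) (by simpa using congrFun h 0)⟩)

lemma wpRel_equivalence (n : ℕ) (w : Fin (n + 1) → ℕ) : Equivalence (wpRel n w) := by
  constructor
  · exact fun x => ⟨1, one_ne_zero, fun j => by simp⟩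
  · rintro x y ⟨t, ht, h⟩
    refine ⟨t⁻¹, inv_ne_zero ht, fun j => ?_⟩
    rw [h j, ← mul_assoc, ← mul_pow, inv_mul_cancel₀ ht, one_pow, one_mul]
  · rintro x y z ⟨t, ht, h⟩ ⟨s, hs, h'⟩
    refine ⟨s * t, mul_ne_zero hs ht, fun j => ?_⟩
    rw [h' j, h j, ← mul_assoc, ← mul_pow]

lemma wbPhi_eq_iff (n : ℕ) (p : Fin (n + 1) → ℕ) (hp : ∀ j, 0 < p j)
    (x y : Fin (n + 1) → ℂ) :
    wbPhi n p x = wbPhi n p y ↔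
      ∃ ξ : ℂ, ξ ^ p 0 = 1 ∧ y 0 = ξ⁻¹ * x 0 ∧
        ∀ i : Fin n, y i.succ = ξ ^ p i.succ * x i.succ := by
  constructor
  · intro h
    have h1 := congrArg Prod.fst h
    have h2 := congrArg Prod.snd h
    have h0 : x 0 ^ p 0 = y 0 ^ p 0 := by
      simpa [wbPhi] using congrFun h1 0
    have hs : ∀ i : Fin n, x 0 ^ p i.succ * x i.succ = y 0 ^ p i.succ * y i.succ := by
      intro i; simpa [wbPhi] using congrFun h1 i.succ
    by_cases hx0 : x 0 = 0
    · have hy0 : y 0 = 0 := by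
        have : y 0 ^ p 0 = 0 := by rw [← h0, hx0, zero_pow (hp 0).ne']
        exact pow_eq_zero_iff (hp 0).ne' |>.mp this
      obtain ⟨t, ht, hrel⟩ :=
        ((wpRel_equivalence n p).eqvGen_iff).mp (Quot.eq.mp h2)
      have htp : t ^ p 0 = 1 := by
        have := hrel 0
        simpa using this.symm
      refine ⟨t, htp, by rw [hx0, hy0, mul_zero], fun i => ?_⟩
      have := hrel i.succ
      simpa using this
    · have hy0 : y 0 ≠ 0 := by
        intro hy
        exact hx0 (pow_eq_zero_iff (hp 0).ne' |>.mp (h0.trans (by rw [hy, zero_pow (hp 0).ne'])))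
      refine ⟨x 0 / y 0, ?_, ?_, fun i => ?_⟩
      · rw [div_pow, h0, div_self (pow_ne_zero _ hy0)]
      · field_simp
      · field_simp
        rw [div_pow, div_mul_eq_mul_div, eq_div_iff (pow_ne_zero _ hy0)]
        linear_combination -(hs i)
  · rintro ⟨ξ, hξ, hy0, hyi⟩
    have hξ0 : ξ ≠ 0 := by
      intro h; rw [h, zero_pow (hp 0).ne'] at hξ; exact zero_ne_one hξ
    have hinv : (ξ⁻¹) ^ p 0 = 1 := by rw [inv_pow, hξ, inv_one]
    unfold wbPhi
    refine Prod.ext ?_ ?_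
    · funext j
      refine Fin.cases ?_ (fun i => ?_) j
      · simp only [Fin.cons_zero]
        rw [hy0, mul_pow, hinv, one_mul]
      · simp only [Fin.cons_succ]
        rw [hy0, hyi i, mul_pow, inv_pow]
        field_simp
    · refine Quot.sound ⟨ξ, hξ0, fun j => ?_⟩
      refine Fin.cases ?_ (fun i => ?_) j
      · simp [hξ]
      · simpa using hyi i

/-- `φ₀(x) = φ₀(y)` iff there is `ξ ∈ μ_{p₀}` with `y₀ = ξ⁻¹x₀` and `yᵢ = ξ^{pᵢ}xᵢ` for
`i ≥ 1`; hence `φ₀` induces a bijection from `X(p₀; −1, p₁, …, pₙ)` onto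
`U₀ = {u₀ ≠ 0} ⊂ Ĉ^{n+1}(p)`. -/
theorem stmt_12 (n : ℕ) (p : Fin (n + 1) → ℕ) (hp : ∀ j, 0 < p j) :
    (∀ x y : Fin (n + 1) → ℂ, wbPhi n p x = wbPhi n p y ↔
      ∃ ξ : ℂ, ξ ^ p 0 = 1 ∧ y 0 = ξ⁻¹ * x 0 ∧
        ∀ i : Fin n, y i.succ = ξ ^ p i.succ * x i.succ) ∧
    ∃ F : Quot (fun x y : Fin (n + 1) → ℂ => ∃ ξ : ℂ, ξ ^ p 0 = 1 ∧
            y 0 = ξ⁻¹ * x 0 ∧ ∀ i : Fin n, y i.succ = ξ ^ p i.succ * x i.succ) →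
          (Fin (n + 1) → ℂ) × Quot (wpRel n p),
      (∀ x, F (Quot.mk _ x) = wbPhi n p x) ∧ Function.Injective F ∧
      Set.range F = {z | ∃ (u : {v : Fin (n + 1) → ℂ // v ≠ 0}) (t : ℂ),
        Quot.mk (wpRel n p) u = z.2 ∧ u.1 0 ≠ 0 ∧ ∀ j, z.1 j = t ^ p j * u.1 j} := by
  refine ⟨wbPhi_eq_iff n p hp, ?_⟩
  refine ⟨Quot.lift (wbPhi n p)
    (fun a b hab => (wbPhi_eq_iff n p hp a b).mpr hab), fun x => rfl, ?_, ?_⟩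
  · intro q₁ q₂
    refine Quot.induction_on₂ q₁ q₂ (fun a b h => ?_)
    exact Quot.sound ((wbPhi_eq_iff n p hp a b).mp h)
  · ext z
    constructor
    · rintro ⟨q, rfl⟩
      refine Quot.induction_on q (fun x => ?_)
      refine ⟨⟨Fin.cons 1 (fun i : Fin n => x i.succ),
        fun h => one_ne_zero (α := ℂ) (by simpa using congrFun h 0)⟩, x 0, rfl, one_ne_zero,
        fun j => ?_⟩
      refine Fin.cases ?_ (fun i => ?_) j <;> simp [wbPhi]
    · rintro ⟨u, t, hq, hu0, hz⟩
      obtain ⟨s, hs⟩ := IsAlgClosed.exists_pow_nat_eq (k := ℂ) (u.1 0) (hp 0)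
      have hs0 : s ≠ 0 := by
        intro h; rw [h, zero_pow (hp 0).ne'] at hs; exact hu0 hs.symm
      refine ⟨Quot.mk _ (Fin.cons (t * s)
        (fun i : Fin n => u.1 i.succ / s ^ p i.succ)), ?_⟩
      show wbPhi n p _ = z
      refine Prod.ext ?_ ?_
      · funext j
        refine Fin.cases ?_ (fun i => ?_) j
        · simp only [wbPhi, Fin.cons_zero, Fin.cons_succ]
          rw [hz 0, ← hs, mul_pow]
        · simp only [wbPhi, Fin.cons_zero, Fin.cons_succ]
          rw [hz i.succ, mul_pow, mul_assoc, mul_comm (s ^ p i.succ),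
            div_mul_cancel₀ _ (pow_ne_zero _ hs0)]
      · rw [← hq]
        show Quot.mk _ _ = _
        refine (Quot.sound ⟨s⁻¹, inv_ne_zero hs0, fun j => ?_⟩).symm
        refine Fin.cases ?_ (fun i => ?_) j
        · simp only [Fin.cons_zero, inv_pow, hs]
          exact (inv_mul_cancel₀ hu0).symm
        · simp only [Fin.cons_succ, inv_pow]
          rw [div_eq_mul_inv, mul_comm]
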